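/- For integers x, ℓ ≥ 2, the maximal weight multiplicity of the simple finite-dimensional gl(ℓ+1,ℂ)-module with highest weight (x,1,0,…,0) (with ℓ−1 zeros) satisfies d((x,1,0^{(ℓ-1)})) ≥ min{x, ℓ}. -/

import Mathlib

set_option maxHeartbeats 1000000
set_option synthInstance.maxHeartbeats 100000

attribute [local instance 100] LieRing.ofAssociativeRing

noncomputable section

/-- The Lie algebra `gl(m, ℂ)` of `m × m` complex matrices. -/
abbrev glMat (m : ℕ) : Type := Matrix (Fin m) (Fin m) ℂ

section GlWeights

variable (m : ℕ) (M : Type) [AddCommGroup M] [Module ℂ M]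
  [LieRingModule (glMat m) M] [LieModule ℂ (glMat m) M]

/-- The weight space of a `gl(m,ℂ)`-module attached to `lam : Fin m → ℂ` (the diagonal
Cartan subalgebra acting via `diagonal d ↦ ∑ᵢ d i * lam i`). -/
def glWtSp (lam : Fin m → ℂ) : Submodule ℂ M where
  carrier := {v | ∀ d : Fin m → ℂ,
    ⁅(Matrix.diagonal d : glMat m), v⁆ = (∑ i, d i * lam i) • v}
  zero_mem' := by intro d; simp
  add_mem' := by intro a b ha hb d; rw [lie_add, ha d, hb d, smul_add]
  smul_mem' := by intro c a ha d; rw [lie_smul, ha d, smul_comm]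

/-- `v` is a highest weight vector of weight `lam` with respect to the Borel subalgebra of
upper-triangular matrices. -/
def IsHWVector (lam : Fin m → ℂ) (v : M) : Prop :=
  v ∈ glWtSp m M lam ∧
  ∀ i j : Fin m, i < j → ⁅(Matrix.single i j (1 : ℂ) : glMat m), v⁆ = 0

/-- `M` is a simple finite-dimensional `gl(m,ℂ)`-module of highest weight `lam`
(with respect to the upper-triangular Borel subalgebra), i.e. `M ≅ L(lam)`. -/
def IsSimpleFDHW (lam : Fin m → ℂ) : Prop :=
  LieModule.IsIrreducible ℂ (glMat m) M ∧ FiniteDimensional ℂ M ∧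
  ∃ v : M, v ≠ 0 ∧ IsHWVector m M lam v

/-- The maximal weight multiplicity (`deg`) of a `gl(m,ℂ)`-module. -/
def maxMult : ℕ :=
  sSup {d : ℕ | ∃ lam : Fin m → ℂ, d = Module.finrank ℂ (glWtSp m M lam)}

end GlWeights

namespace DegAux

variable {n : ℕ} {L : Type} [AddCommGroup L] [Module ℂ L]
  [LieRingModule (glMat n) L] [LieModule ℂ (glMat n) L]

/-- Elementary matrix. -/
def EE (a b : Fin n) : glMat n := Matrix.single a b 1

lemma EE_mul (a b c d : Fin n) : EE a b * EE c d = if b = c then EE a d else 0 := by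
  by_cases h : b = c
  · subst h; simp [EE]
  · simp [EE, Matrix.single_mul_single_of_ne (h := h), h]

lemma lie_EE (a b c d : Fin n) :
    ⁅EE a b, EE c d⁆ = (if b = c then EE a d else 0) - (if d = a then EE c b else 0) := by
  rw [Ring.lie_def, EE_mul, EE_mul]

lemma mem_glWtSp {lam : Fin n → ℂ} {w : L} : w ∈ glWtSp n L lam ↔ ∀ d : Fin n → ℂ,
    ⁅(Matrix.diagonal d : glMat n), w⁆ = (∑ i, d i * lam i) • w := Iff.rfl

lemma sum_chi_mul (a : Fin n) (lam : Fin n → ℂ) :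
    (∑ i, (if i = a then (1:ℂ) else 0) * lam i) = lam a := by
  simp [ite_mul, Finset.sum_ite_eq']

lemma EE_diag (a : Fin n) :
    EE a a = Matrix.diagonal (fun i => if i = a then (1:ℂ) else 0) := by
  ext i j
  rcases eq_or_ne i j with rfl | hij
  · simp [EE, Matrix.single, Matrix.diagonal, eq_comm]
  · simp only [EE, Matrix.single, Matrix.of_apply, Matrix.diagonal_apply_ne _ hij,
      ite_eq_right_iff, and_imp]
    rintro rfl rfl; exact absurd rfl hij

lemma Eaa_act {lam : Fin n → ℂ} {w : L} (hw : w ∈ glWtSp n L lam) (a : Fin n) :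
    ⁅EE a a, w⁆ = lam a • w := by
  rw [EE_diag, mem_glWtSp.mp hw, sum_chi_mul]

lemma diag_lie_EE (d : Fin n → ℂ) (a b : Fin n) :
    ⁅(Matrix.diagonal d : glMat n), EE a b⁆ = (d a - d b) • EE a b := by
  rw [Ring.lie_def]
  ext i j
  simp only [Matrix.sub_apply, Matrix.diagonal_mul, Matrix.mul_diagonal, Matrix.smul_apply,
    smul_eq_mul]
  by_cases h : a = i ∧ b = j
  · obtain ⟨rfl, rfl⟩ := h; ring
  · have hz : (EE a b) i j = 0 := by
      simp only [EE, Matrix.single, Matrix.of_apply, ite_eq_right_iff]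
      intro hc; exact absurd hc h
    rw [hz]; ring

lemma wt_shift {lam : Fin n → ℂ} {w : L} (hw : w ∈ glWtSp n L lam) {a b : Fin n} :
    ⁅EE a b, w⁆ ∈ glWtSp n L
      (fun i => lam i + ((if i = a then 1 else 0) - (if i = b then 1 else 0))) := by
  rw [mem_glWtSp]
  intro d
  rw [leibniz_lie, diag_lie_EE, mem_glWtSp.mp hw d, smul_lie, lie_smul]
  have hsum : (∑ i, d i * (lam i + ((if i = a then 1 else 0) - (if i = b then 1 else 0))))
      = (∑ i, d i * lam i) + (d a - d b) := by
    simp only [mul_add, mul_sub, mul_ite, mul_one, mul_zero, Finset.sum_add_distrib,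
      Finset.sum_sub_distrib, Finset.sum_ite_eq', Finset.mem_univ, if_true]
  rw [hsum, add_smul]
  abel


/-- The action of a matrix as a linear endomorphism. -/
def endo (A : glMat n) : Module.End ℂ L where
  toFun w := ⁅A, w⁆
  map_add' u w := lie_add A u w
  map_smul' c w := lie_smul c A w

@[simp] lemma endo_apply (A : glMat n) (w : L) : endo A w = ⁅A, w⁆ := rfl

lemma endo_comm {A B : glMat n} (h : ⁅A, B⁆ = 0) :
    Commute (endo A (L := L)) (endo B) := by
  apply LinearMap.ext
  intro w
  have := lie_lie A B w
  rw [h, zero_lie] at this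
  simpa [Module.End.mul_apply] using sub_eq_zero.mp this.symm

/-- In a finite-dimensional module, a vector annihilated by `e = E a b` whose weight pairs
trivially with the corresponding coroot is annihilated by `f = E b a` (sl₂ theory). -/
lemma lower_kills [FiniteDimensional ℂ L] {lam : Fin n → ℂ} {v : L}
    (hv : v ∈ glWtSp n L lam) {a b : Fin n} (hab : a ≠ b) (hl : lam a = lam b)
    (he : ⁅EE a b, v⁆ = 0) : ⁅EE b a, v⁆ = 0 := by
  set f : Module.End ℂ L := endo (EE b a) with hf
  set w : ℕ → L := fun p => (f ^ p) v with hwdef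
  have hw0 : w 0 = v := rfl
  have hwsucc : ∀ p, w (p + 1) = ⁅EE b a, w p⁆ := by
    intro p
    rw [hwdef]
    simp only [pow_succ', Module.End.mul_apply]
    rfl
  have hxy : ⁅EE a a - EE b b, EE b a⁆ = (-2 : ℂ) • EE b a := by
    rw [sub_lie, lie_EE, lie_EE]
    simp [hab, Ne.symm hab]
    module
  have hH : ∀ p, ⁅EE a a - EE b b, w p⁆ = ((-2 : ℂ) * p) • w p := by
    intro p
    induction p with
    | zero =>
      rw [hw0, sub_lie, Eaa_act hv, Eaa_act hv, hl]
      simp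
    | succ p ih =>
      rw [hwsucc p, leibniz_lie, hxy, smul_lie, ih, lie_smul, ← hwsucc p]
      rw [show ((-2 : ℂ) * (p + 1 : ℕ)) = (-2) + (-2) * p by push_cast; ring, add_smul]
  have hE : ∀ p, ⁅EE a b, w (p + 1)⁆ = (-((p : ℂ) + 1) * p) • w p := by
    intro p
    induction p with
    | zero =>
      rw [hwsucc 0, leibniz_lie, lie_EE, hw0, he, lie_zero, add_zero]
      simp only [eq_self_iff_true, if_true]
      rw [sub_lie, Eaa_act hv, Eaa_act hv, hl]
      simp
    | succ p ih =>
      rw [hwsucc (p+1), leibniz_lie, lie_EE, ih, lie_smul, ← hwsucc p]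
      simp only [eq_self_iff_true, if_true]
      rw [hH (p+1), ← add_smul]
      congr 1
      push_cast
      ring
  by_contra hne
  have hnz : ∀ p, w (p + 1) ≠ 0 := by
    intro p
    induction p with
    | zero =>
      intro h
      rw [hwsucc 0, hw0] at h
      exact hne h
    | succ p ih =>
      intro h
      have h2 := hE (p + 1)
      rw [h, lie_zero] at h2
      have hs : (-((p : ℂ) + 1 + 1) * ((p : ℕ) + 1 : ℕ)) ≠ 0 := by
        have h1 : (((p + 2 : ℕ)) : ℂ) ≠ 0 := Nat.cast_ne_zero.mpr (by omega)
        have h3 : (((p + 1 : ℕ)) : ℂ) ≠ 0 := Nat.cast_ne_zero.mpr (by omega)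
        push_cast at h1 h3 ⊢
        exact mul_ne_zero (by intro hc; apply h1; linear_combination -hc) h3
      rcases smul_eq_zero.mp h2.symm with hs0 | hw0'
      · apply hs
        push_cast at hs0 ⊢
        linear_combination hs0
      · exact ih hw0'
  -- eigenvectors of the diagonal action with distinct eigenvalues
  set H : Module.End ℂ L := endo (EE a a - EE b b) with hHdef
  have hvec : ∀ p : ℕ, H.HasEigenvector ((-2 : ℂ) * (p + 1)) (w (p + 1)) := by
    intro p
    constructor
    · rw [Module.End.mem_eigenspace_iff]
      show ⁅EE a a - EE b b, w (p+1)⁆ = _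
      rw [hH (p+1)]
      congr 1
      push_cast
      ring
    · exact hnz p
  have hinj : Function.Injective (fun p : ℕ => (-2 : ℂ) * ((p : ℂ) + 1)) := by
    intro p q hpq
    simp only at hpq
    have : (p : ℂ) = q := by linear_combination hpq / (-2)
    exact_mod_cast this
  have hli := H.eigenvectors_linearIndependent' (fun p : ℕ => (-2 : ℂ) * ((p : ℂ) + 1))
    hinj (fun p => w (p + 1)) hvec
  exact Module.Finite.not_linearIndependent_of_infinite _ hli

section Prods

variable (o : Fin n)

lemma lie_FF {a b : Fin n} (hao : a ≠ o) (hbo : b ≠ o) : ⁅EE a o, EE b o⁆ = (0 : glMat n) := by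
  rw [lie_EE]
  simp [Ne.symm hao, Ne.symm hbo]

lemma lie_RR {a b : Fin n} (hao : a ≠ o) (hbo : b ≠ o) : ⁅EE o a, EE o b⁆ = (0 : glMat n) := by
  rw [lie_EE]
  simp [hao, hbo]

/-- Lowering operator (mapping weight from `o` to `m`), trivial if `m = o`. -/
def Fop (m : Fin n) : Module.End ℂ L := if m = o then 1 else endo (EE m o)

/-- Raising operator, trivial if `m = o`. -/
def Rop (m : Fin n) : Module.End ℂ L := if m = o then 1 else endo (EE o m)

lemma Fop_comm (a b : Fin n) : Commute (Fop o a (L := L)) (Fop o b) := by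
  unfold Fop
  split_ifs with h1 h2 h2
  · exact Commute.refl 1
  · exact Commute.one_left _
  · exact Commute.one_right _
  · exact endo_comm (lie_FF o h1 h2)

lemma Rop_comm (a b : Fin n) : Commute (Rop o a (L := L)) (Rop o b) := by
  unfold Rop
  split_ifs with h1 h2 h2
  · exact Commute.refl 1
  · exact Commute.one_left _
  · exact Commute.one_right _
  · exact endo_comm (lie_RR o h1 h2)

/-- Product of lowering operators over a finset. -/
def Pprod (W : Finset (Fin n)) : Module.End ℂ L :=
  W.noncommProd (Fop o) (fun a _ b _ _ => Fop_comm o a b)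

/-- Product of raising operators over a finset. -/
def Qprod (W : Finset (Fin n)) : Module.End ℂ L :=
  W.noncommProd (Rop o) (fun a _ b _ _ => Rop_comm o a b)

lemma Pprod_empty : Pprod o (∅ : Finset (Fin n)) = (1 : Module.End ℂ L) :=
  Finset.noncommProd_empty _ _

lemma Qprod_empty : Qprod o (∅ : Finset (Fin n)) = (1 : Module.End ℂ L) :=
  Finset.noncommProd_empty _ _

lemma Pprod_insert {a : Fin n} {W : Finset (Fin n)} (ha : a ∉ W) :
    Pprod o (insert a W) = Fop o a * Pprod o W (L := L) :=
  Finset.noncommProd_insert_of_notMem _ _ _ _ ha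

lemma Qprod_insert {a : Fin n} {W : Finset (Fin n)} (ha : a ∉ W) :
    Qprod o (insert a W) = Rop o a * Qprod o W (L := L) :=
  Finset.noncommProd_insert_of_notMem _ _ _ _ ha

lemma Fop_apply {m : Fin n} (h : m ≠ o) (w : L) : Fop o m w = ⁅EE m o, w⁆ := by
  rw [Fop, if_neg h]; rfl

lemma Rop_apply {m : Fin n} (h : m ≠ o) (w : L) : Rop o m w = ⁅EE o m, w⁆ := by
  rw [Rop, if_neg h]; rfl

lemma Pprod_insert_apply {a : Fin n} {W : Finset (Fin n)} (ha : a ∉ W) (hao : a ≠ o) (w : L) :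
    Pprod o (insert a W) w = ⁅EE a o, Pprod o W w⁆ := by
  rw [Pprod_insert o ha, Module.End.mul_apply, Fop_apply o hao]

lemma Pprod_singleton {a : Fin n} (hao : a ≠ o) (w : L) :
    Pprod o ({a} : Finset (Fin n)) w = ⁅EE a o, w⁆ := by
  have : ({a} : Finset (Fin n)) = insert a ∅ := rfl
  rw [this, Pprod_insert_apply o (Finset.notMem_empty a) hao, Pprod_empty]
  rfl

/-- The weight obtained from `lam` by moving `W.card` units from slot `o` to the slots of `W`. -/
def addWt (lam : Fin n → ℂ) (W : Finset (Fin n)) : Fin n → ℂ :=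
  fun i => lam i + ((if i ∈ W then 1 else 0) - (if i = o then (W.card : ℂ) else 0))

variable {Ω : Finset (Fin n)} {y : L} {lamy : Fin n → ℂ}

/-- Weight of the vector obtained by applying lowering operators. -/
lemma wtP (hoΩ : o ∉ Ω) (hy : y ∈ glWtSp n L lamy) :
    ∀ W : Finset (Fin n), W ⊆ Ω → Pprod o W y ∈ glWtSp n L (addWt o lamy W) := by
  intro W
  induction W using Finset.induction_on with
  | empty =>
    intro _
    have h1 : addWt o lamy ∅ = lamy := by
      funext i; simp [addWt]
    rw [h1, Pprod_empty]
    exact hy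
  | @insert a W ha ih =>
    intro hsub
    have haΩ : a ∈ Ω := hsub (Finset.mem_insert_self a W)
    have hWΩ : W ⊆ Ω := fun i hi => hsub (Finset.mem_insert_of_mem hi)
    have hao : a ≠ o := fun h => hoΩ (h ▸ haΩ)
    have hoW : o ∉ W := fun h => hoΩ (hWΩ h)
    rw [Pprod_insert_apply o ha hao]
    have hmem := wt_shift (ih hWΩ) (a := a) (b := o)
    have hfun : (fun i => addWt o lamy W i + ((if i = a then (1:ℂ) else 0) - (if i = o then 1 else 0)))
        = addWt o lamy (insert a W) := by
      funext i
      simp only [addWt, Finset.mem_insert, Finset.card_insert_of_notMem ha]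
      by_cases hia : i = a
      · subst hia
        simp [ha, hao]
      · by_cases hio : i = o
        · subst hio
          simp only [hoW, Ne.symm hao ,if_false, if_pos rfl, hia, eq_self_iff_true, if_true,
            false_or]
          push_cast
          ring
        · simp [hia, hio]
    rw [← hfun]
    exact hmem

/-- Mixed-root operators move a lowering index. -/
lemma braket_mix (hoΩ : o ∉ Ω) (H3 : ∀ m ∈ Ω, ∀ m' ∈ Ω, m' ≠ m → ⁅EE m' m, y⁆ = 0) :
    ∀ W : Finset (Fin n), W ⊆ Ω → ∀ m ∈ Ω, ∀ m' ∈ Ω, m' ≠ m →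
      ⁅EE m' m, Pprod o W y⁆ =
        if m ∈ W then ⁅EE m' o, Pprod o (W.erase m) y⁆ else 0 := by
  intro W
  induction W using Finset.induction_on with
  | empty =>
    intro _ m hm m' hm' hne
    rw [if_neg (Finset.notMem_empty m)]
    exact H3 m hm m' hm' hne
  | @insert a W ha ih =>
    intro hsub m hm m' hm' hne
    have haΩ : a ∈ Ω := hsub (Finset.mem_insert_self a W)
    have hWΩ : W ⊆ Ω := fun i hi => hsub (Finset.mem_insert_of_mem hi)
    have hao : a ≠ o := fun h => hoΩ (h ▸ haΩ)
    have hm'o : m' ≠ o := fun h => hoΩ (h ▸ hm')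
    have hmo : m ≠ o := fun h => hoΩ (h ▸ hm)
    rw [Pprod_insert_apply o ha hao, leibniz_lie, lie_EE]
    rw [if_neg (Ne.symm hm'o)]
    by_cases hma : m = a
    · subst hma
      rw [if_pos rfl, ih hWΩ m hm m' hm' hne, if_neg ha, lie_zero, add_zero, sub_zero,
        if_pos (Finset.mem_insert_self m W), Finset.erase_insert ha]
    · rw [if_neg hma, sub_zero, zero_lie, zero_add, ih hWΩ m hm m' hm' hne]
      by_cases hmW : m ∈ W
      · rw [if_pos hmW]
        have hswap : ⁅EE a o, ⁅EE m' o, Pprod o (W.erase m) y⁆⁆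
            = ⁅EE m' o, ⁅EE a o, Pprod o (W.erase m) y⁆⁆ := by
          have h0 := lie_lie (EE a o) (EE m' o) (Pprod o (W.erase m) y)
          rw [lie_FF o hao hm'o, zero_lie] at h0
          exact eq_of_sub_eq_zero h0.symm
        have haerase : a ∉ W.erase m := fun h => ha (Finset.mem_of_mem_erase h)
        rw [hswap, ← Pprod_insert_apply o haerase hao,
          ← Finset.erase_insert_of_ne (Ne.symm hma),
          if_pos (Finset.mem_insert_of_mem hmW)]
      · rw [if_neg hmW, lie_zero, if_neg (by simp [hma, hmW])]

/-- Raising operators against a product of lowerings. -/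
lemma braket_raise (hoΩ : o ∉ Ω) (hy : y ∈ glWtSp n L lamy)
    (H2 : ∀ m ∈ Ω, ⁅EE o m, y⁆ = 0)
    (H3 : ∀ m ∈ Ω, ∀ m' ∈ Ω, m' ≠ m → ⁅EE m' m, y⁆ = 0)
    (H4 : ∀ m ∈ Ω, lamy m = 0) :
    ∀ W : Finset (Fin n), W ⊆ Ω → ∀ m ∈ Ω,
      ⁅EE o m, Pprod o W y⁆ =
        if m ∈ W then (lamy o + 1 - (W.card : ℂ)) • Pprod o (W.erase m) y else 0 := by
  intro W
  induction W using Finset.induction_on with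
  | empty =>
    intro _ m hm
    rw [if_neg (Finset.notMem_empty m)]
    exact H2 m hm
  | @insert a W ha ih =>
    intro hsub m hm
    have haΩ : a ∈ Ω := hsub (Finset.mem_insert_self a W)
    have hWΩ : W ⊆ Ω := fun i hi => hsub (Finset.mem_insert_of_mem hi)
    have hao : a ≠ o := fun h => hoΩ (h ▸ haΩ)
    have hoW : o ∉ W := fun h => hoΩ (hWΩ h)
    rw [Pprod_insert_apply o ha hao, leibniz_lie, lie_EE, if_pos rfl]
    by_cases hma : m = a
    · subst hma
      have hz := wtP o hoΩ hy W hWΩ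
      rw [if_pos rfl, sub_lie, Eaa_act hz, Eaa_act hz, ih hWΩ m hm, if_neg ha, lie_zero,
        add_zero, if_pos (Finset.mem_insert_self m W), Finset.erase_insert ha,
        Finset.card_insert_of_notMem ha]
      have hA : addWt o lamy W o = lamy o - (W.card : ℂ) := by
        simp only [addWt]
        rw [if_neg hoW]
        simp only [if_pos rfl, eq_self_iff_true, if_true]
        ring
      have hB : addWt o lamy W m = 0 := by
        simp [addWt, ha, hao, H4 m haΩ]
      rw [hA, hB, zero_smul, sub_zero]
      congr 1
      push_cast
      ring
    · have ham : a ≠ m := fun h => hma h.symm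
      rw [if_neg hma, zero_sub, neg_lie,
        braket_mix o hoΩ H3 W hWΩ m hm a haΩ ham, ih hWΩ m hm]
      by_cases hmW : m ∈ W
      · have haerase : a ∉ W.erase m := fun h => ha (Finset.mem_of_mem_erase h)
        have hX : ⁅EE a o, Pprod o (W.erase m) y⁆ = Pprod o ((insert a W).erase m) y := by
          rw [Finset.erase_insert_of_ne ham, Pprod_insert_apply o haerase hao]
        rw [if_pos hmW, if_pos hmW, lie_smul, hX,
          if_pos (Finset.mem_insert_of_mem hmW), Finset.card_insert_of_notMem ha]
        push_cast
        module
      · rw [if_neg hmW, if_neg hmW, lie_zero, add_zero, neg_zero,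
          if_neg (by simp [hma, hmW])]

/-- Pairing a product of raisings against a product of lowerings. -/
lemma raise_prod (hoΩ : o ∉ Ω) (hy : y ∈ glWtSp n L lamy)
    (H2 : ∀ m ∈ Ω, ⁅EE o m, y⁆ = 0)
    (H3 : ∀ m ∈ Ω, ∀ m' ∈ Ω, m' ≠ m → ⁅EE m' m, y⁆ = 0)
    (H4 : ∀ m ∈ Ω, lamy m = 0) :
    ∀ W' W : Finset (Fin n), W ⊆ Ω → W' ⊆ W →
      Qprod o W' (Pprod o W y)
        = (∏ i ∈ Finset.range W'.card, (lamy o + 1 + (i : ℂ) - (W.card : ℂ)))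
            • Pprod o (W \ W') y := by
  intro W'
  induction W' using Finset.induction_on with
  | empty =>
    intro W hWΩ _
    simp [Qprod_empty]
  | @insert a W'' ha ih =>
    intro W hWΩ hsub
    have haW : a ∈ W := hsub (Finset.mem_insert_self a W'')
    have hW''W : W'' ⊆ W := fun i hi => hsub (Finset.mem_insert_of_mem hi)
    have haΩ : a ∈ Ω := hWΩ haW
    have hao : a ≠ o := fun h => hoΩ (h ▸ haΩ)
    have hsd : W \ W'' ⊆ Ω := fun i hi => hWΩ (Finset.mem_sdiff.mp hi).1
    have hasd : a ∈ W \ W'' := Finset.mem_sdiff.mpr ⟨haW, ha⟩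
    rw [Qprod_insert o ha, Module.End.mul_apply, ih W hWΩ hW''W, map_smul, Rop_apply o hao,
      braket_raise o hoΩ hy H2 H3 H4 (W \ W'') hsd a haΩ, if_pos hasd, smul_smul]
    have herase : (W \ W'').erase a = W \ insert a W'' := by
      ext i
      simp only [Finset.mem_erase, Finset.mem_sdiff, Finset.mem_insert]
      tauto
    rw [herase, Finset.card_sdiff_of_subset hW''W, Finset.card_insert_of_notMem ha,
      Finset.prod_range_succ]
    congr 1
    have hcast : ((W.card - W''.card : ℕ) : ℂ) = (W.card : ℂ) - (W''.card : ℂ) :=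
      Nat.cast_sub (Finset.card_le_card hW''W)
    rw [hcast]
    ring

end Prods

section Comps

variable {o t i j m m' : Fin n} {v z : L} {lam lamz : Fin n → ℂ}

lemma C3a (hv : v ∈ glWtSp n L lam) (hot : ⁅EE o t, v⁆ = 0) :
    ⁅EE o t, ⁅EE t o, v⁆⁆ = (lam o - lam t) • v := by
  rw [leibniz_lie, lie_EE, if_pos rfl, if_pos rfl, hot, lie_zero, add_zero, sub_lie,
    Eaa_act hv, Eaa_act hv, sub_smul]

lemma C0 (hmt : m ≠ t) (h1 : ⁅EE o m, v⁆ = 0) (h2 : ⁅EE t m, v⁆ = 0) :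
    ⁅EE o m, ⁅EE t o, v⁆⁆ = 0 := by
  rw [leibniz_lie, lie_EE, if_neg hmt, if_pos rfl, zero_sub, neg_lie, h2, neg_zero, zero_add,
    h1, lie_zero]

lemma C1 (hmj : m ≠ j) (hmt : m ≠ t) (hto : ¬ t = o)
    (h1 : ⁅EE o m, v⁆ = 0) (h2 : ⁅EE t m, v⁆ = 0) :
    ⁅EE o m, ⁅EE j t, ⁅EE t o, v⁆⁆⁆ = 0 := by
  rw [leibniz_lie, lie_EE, if_neg hmj, if_neg hto, sub_zero, zero_lie, zero_add,
    C0 hmt h1 h2, lie_zero]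

lemma C2 (hmj : m ≠ j) (htm' : ¬ t = m') (hmt : m ≠ t) (hom' : ¬ o = m')
    (h3 : ⁅EE m' m, v⁆ = 0) :
    ⁅EE m' m, ⁅EE j t, ⁅EE t o, v⁆⁆⁆ = 0 := by
  have hinner : ⁅EE m' m, ⁅EE t o, v⁆⁆ = 0 := by
    rw [leibniz_lie, lie_EE, if_neg hmt, if_neg hom', sub_zero, zero_lie, zero_add, h3,
      lie_zero]
  rw [leibniz_lie, lie_EE, if_neg hmj, if_neg htm', sub_zero, zero_lie, zero_add, hinner,
    lie_zero]

lemma C4b (hjt : ¬ j = t) (hot : ¬ o = t) (hk : ⁅EE t j, v⁆ = 0) :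
    ⁅EE t j, ⁅EE t o, v⁆⁆ = 0 := by
  rw [leibniz_lie, lie_EE, if_neg hjt, if_neg hot, sub_zero, zero_lie, zero_add, hk, lie_zero]

lemma C4 (hz : z ∈ glWtSp n L lamz) (h2 : ⁅EE t j, z⁆ = 0) :
    ⁅EE t j, ⁅EE j t, z⁆⁆ = (lamz t - lamz j) • z := by
  rw [leibniz_lie, lie_EE, if_pos rfl, if_pos rfl, h2, lie_zero, add_zero, sub_lie,
    Eaa_act hz, Eaa_act hz, sub_smul]

lemma C5 (hit : i ≠ t) (hoj : ¬ o = j) (htj : ¬ t = j) (hkji : ⁅EE j i, v⁆ = 0) :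
    ⁅EE j i, ⁅EE i t, ⁅EE t o, v⁆⁆⁆ = ⁅EE j t, ⁅EE t o, v⁆⁆ := by
  have hinner : ⁅EE j i, ⁅EE t o, v⁆⁆ = 0 := by
    rw [leibniz_lie, lie_EE, if_neg hit, if_neg hoj, sub_zero, zero_lie, zero_add, hkji,
      lie_zero]
  rw [leibniz_lie, lie_EE, if_pos rfl, if_neg htj, sub_zero, hinner, lie_zero, add_zero]

lemma C6 (hot : ¬ o = t) (hk : ⁅EE t j, v⁆ = 0) :
    ⁅EE t j, ⁅EE j o, v⁆⁆ = ⁅EE t o, v⁆ := by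
  rw [leibniz_lie, lie_EE, if_pos rfl, if_neg hot, sub_zero, hk, lie_zero, add_zero]

lemma C3' (hv : v ∈ glWtSp n L lam) (hjt : ¬ j = t) (hto : ¬ t = o)
    (k1 : ⁅EE o t, v⁆ = 0) (k2 : ⁅EE t j, v⁆ = 0) (k3 : ⁅EE o j, v⁆ = 0) :
    ⁅EE o j, ⁅EE j t, ⁅EE t o, v⁆⁆⁆ = (lam o - lam t) • v := by
  have hinner : ⁅EE o j, ⁅EE t o, v⁆⁆ = 0 := by
    rw [leibniz_lie, lie_EE, if_neg hjt, if_pos rfl, zero_sub, neg_lie, k2, neg_zero,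
      zero_add, k3, lie_zero]
  rw [leibniz_lie, lie_EE, if_pos rfl, if_neg hto, sub_zero, hinner, lie_zero, add_zero,
    C3a hv k1]

lemma C7 (hv : v ∈ glWtSp n L lam) (hij : ¬ i = j) (hit : ¬ i = t) (hto : ¬ t = o)
    (hoj : ¬ o = j) (htj : ¬ t = j)
    (k1 : ⁅EE o t, v⁆ = 0) (k2 : ⁅EE t i, v⁆ = 0) (k3 : ⁅EE o i, v⁆ = 0)
    (k4 : ⁅EE j i, v⁆ = 0) :
    ⁅EE o i, ⁅EE j o, ⁅EE i t, ⁅EE t o, v⁆⁆⁆⁆ =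
      (lam o - lam t) • ⁅EE j o, v⁆ - ⁅EE j t, ⁅EE t o, v⁆⁆ := by
  rw [leibniz_lie, lie_EE, if_neg hij, if_pos rfl, zero_sub, neg_lie,
    C5 (fun h => hit h) hoj htj k4,
    C3' hv (fun h => hit h) hto k1 k2 k3, lie_smul]
  abel

end Comps

end DegAux

open DegAux in
theorem deg_x_one_zeros (x l : ℕ) (hx : 2 ≤ x) (hl : 2 ≤ l)
    (L : Type) [AddCommGroup L] [Module ℂ L] [LieRingModule (glMat (l + 1)) L]
    [LieModule ℂ (glMat (l + 1)) L]
    (hL : IsSimpleFDHW (l + 1) L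
      (fun i => if (i : ℕ) = 0 then (x : ℂ) else if (i : ℕ) = 1 then 1 else 0)) :
    min x l ≤ maxMult (l + 1) L := by
  classical
  obtain ⟨hirr, hfd, v, hv0, hv⟩ := hL
  haveI : FiniteDimensional ℂ L := hfd
  set lam : Fin (l + 1) → ℂ :=
    fun i => if (i : ℕ) = 0 then (x : ℂ) else if (i : ℕ) = 1 then 1 else 0 with hlamdef
  set k : ℕ := min x l with hkdef
  have hk2 : 2 ≤ k := le_min hx hl
  have hkx : k ≤ x := min_le_left x l
  have hkl : k ≤ l := min_le_right x l
  set K2 : ℕ := k - 2 with hK2def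
  have hkK2 : k = K2 + 2 := by omega
  set o : Fin (l + 1) := ⟨0, by omega⟩ with hodef
  set t : Fin (l + 1) := ⟨1, by omega⟩ with htdef
  have hov : (o : ℕ) = 0 := rfl
  have htv : (t : ℕ) = 1 := rfl
  have hto : t ≠ o := Fin.ne_of_val_ne (by omega)
  have hot : o ≠ t := Fin.ne_of_val_ne (by omega)
  -- the set S of indices {2, ..., k}
  set S : Finset (Fin (l + 1)) :=
    Finset.univ.filter (fun i => 2 ≤ (i : ℕ) ∧ (i : ℕ) ≤ k) with hSdef
  have hmemS : ∀ jj : Fin (l + 1), jj ∈ S ↔ (2 ≤ (jj : ℕ) ∧ (jj : ℕ) ≤ k) := by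
    intro jj; simp [hSdef]
  have hoS : o ∉ S := by
    intro h; rw [hmemS] at h; omega
  have htS : t ∉ S := by
    intro h; rw [hmemS] at h; omega
  have hjS : ∀ jj ∈ S, 2 ≤ (jj : ℕ) ∧ (jj : ℕ) ≤ k := fun jj hjj => (hmemS jj).mp hjj
  have hjo : ∀ jj ∈ S, jj ≠ o := by
    intro jj hjj; have := hjS jj hjj; exact Fin.ne_of_val_ne (by omega)
  have hjt : ∀ jj ∈ S, jj ≠ t := by
    intro jj hjj; have := hjS jj hjj; exact Fin.ne_of_val_ne (by omega)
  have hcardS : S.card = K2 + 1 := by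
    have hbij : S.card = (Finset.Icc 2 k).card := by
      apply Finset.card_bij (fun (a : Fin (l+1)) _ => (a : ℕ))
      · intro a ha
        have := hjS a ha
        rw [Finset.mem_Icc]
        omega
      · intro a _ b _ hab
        exact Fin.val_injective hab
      · intro b hb
        rw [Finset.mem_Icc] at hb
        refine ⟨⟨b, by omega⟩, ?_, rfl⟩
        rw [hmemS]
        exact ⟨by simpa using hb.1, by simpa using hb.2⟩
    rw [hbij, Nat.card_Icc]
    omega
  -- basic facts about the highest weight
  have hlamo : lam o = (x : ℂ) := by simp [hlamdef, hov, hodef]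
  have hlamt : lam t = 1 := by simp [hlamdef, htv, htdef]
  have hlam2 : ∀ m : Fin (l + 1), 2 ≤ (m : ℕ) → lam m = 0 := by
    intro m hm
    simp only [hlamdef]
    rw [if_neg (by omega), if_neg (by omega)]
  have hlamot : lam o - lam t = (x : ℂ) - 1 := by rw [hlamo, hlamt]
  -- kills
  have hkv : ∀ a b : Fin (l + 1), (a : ℕ) < (b : ℕ) → ⁅EE a b, v⁆ = 0 := by
    intro a b h
    exact hv.2 a b h
  have hkv2 : ∀ a b : Fin (l + 1), 2 ≤ (a : ℕ) → 2 ≤ (b : ℕ) → a ≠ b → ⁅EE a b, v⁆ = 0 := by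
    intro a b ha hb hab
    have hvalne : (a : ℕ) ≠ (b : ℕ) := fun h => hab (Fin.val_injective h)
    rcases Nat.lt_or_ge (a : ℕ) (b : ℕ) with h | h
    · exact hkv a b h
    · exact lower_kills hv.1 (Ne.symm hab) (by rw [hlam2 b hb, hlam2 a ha])
        (hkv b a (by omega))
  -- the auxiliary vectors
  set z : L := ⁅EE t o, v⁆ with hzdef
  set y : Fin (l + 1) → L := fun jj => ⁅EE jj t, z⁆ with hydef
  set lamz : Fin (l + 1) → ℂ :=
    fun i => lam i + ((if i = t then 1 else 0) - (if i = o then 1 else 0)) with hlamzdef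
  have hzw : z ∈ glWtSp (l + 1) L lamz := wt_shift hv.1
  set lamy : Fin (l + 1) → Fin (l + 1) → ℂ :=
    fun jj i => lamz i + ((if i = jj then 1 else 0) - (if i = t then 1 else 0)) with hlamydef
  have hyw : ∀ jj, y jj ∈ glWtSp (l + 1) L (lamy jj) := fun jj => wt_shift hzw
  have hlamzt : lamz t = 2 := by
    simp [hlamzdef, hto, hlamt]
    try ring
    try norm_num
  have hlamz2 : ∀ m : Fin (l + 1), 2 ≤ (m : ℕ) → lamz m = 0 := by
    intro m hm
    have hmo : m ≠ o := Fin.ne_of_val_ne (by omega)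
    have hmt : m ≠ t := Fin.ne_of_val_ne (by omega)
    simp [hlamzdef, hmo, hmt, hlam2 m hm]
    try ring
    try norm_num
  have hlamyo : ∀ jj ∈ S, lamy jj o = (x : ℂ) - 1 := by
    intro jj hjj
    simp [hlamydef, hlamzdef, Ne.symm (hjo jj hjj), hot, hlamo]
    try ring
    try norm_num
  have hlamy2 : ∀ jj ∈ S, ∀ m : Fin (l + 1), 2 ≤ (m : ℕ) → m ≠ jj → lamy jj m = 0 := by
    intro jj hjj m hm hmj
    have hmt : m ≠ t := Fin.ne_of_val_ne (by omega)
    simp [hlamydef, hmj, hmt, hlamz2 m hm]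
    try ring
    try norm_num
  -- hypotheses for the base vector v with index set S
  have H2v : ∀ m ∈ S, ⁅EE o m, v⁆ = 0 := by
    intro m hm; exact hkv o m (by have := hjS m hm; omega)
  have H3v : ∀ m ∈ S, ∀ m' ∈ S, m' ≠ m → ⁅EE m' m, v⁆ = 0 := by
    intro m hm m' hm' hne
    exact hkv2 m' m (hjS m' hm').1 (hjS m hm).1 hne
  have H4v : ∀ m ∈ S, lam m = 0 := fun m hm => hlam2 m (hjS m hm).1
  -- hypotheses for the base vectors y j with index set S.erase j
  have hoE : ∀ jj, o ∉ S.erase jj := fun jj h => hoS (Finset.mem_of_mem_erase h)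
  have hmE : ∀ jj, ∀ m ∈ S.erase jj, m ∈ S ∧ m ≠ jj := by
    intro jj m hm
    exact ⟨Finset.mem_of_mem_erase hm, Finset.ne_of_mem_erase hm⟩
  have H2y : ∀ jj ∈ S, ∀ m ∈ S.erase jj, ⁅EE o m, y jj⁆ = 0 := by
    intro jj hjj m hm
    obtain ⟨hmS, hmj⟩ := hmE jj m hm
    have h2 := hjS m hmS
    rw [hydef, hzdef]
    exact C1 hmj (hjt m hmS) (fun h => hto h) (H2v m hmS) (hkv t m (by omega))
  have H3y : ∀ jj ∈ S, ∀ m ∈ S.erase jj, ∀ m' ∈ S.erase jj, m' ≠ m → ⁅EE m' m, y jj⁆ = 0 := by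
    intro jj hjj m hm m' hm' hne
    obtain ⟨hmS, hmj⟩ := hmE jj m hm
    obtain ⟨hm'S, hm'j⟩ := hmE jj m' hm'
    rw [hydef, hzdef]
    exact C2 hmj (fun h => (hjt m' hm'S) h.symm) (hjt m hmS) (fun h => (hjo m' hm'S) h.symm)
      (H3v m hmS m' hm'S hne)
  have H4y : ∀ jj ∈ S, ∀ m ∈ S.erase jj, lamy jj m = 0 := by
    intro jj hjj m hm
    obtain ⟨hmS, hmj⟩ := hmE jj m hm
    exact hlamy2 jj hjj m (hjS m hmS).1 hmj
  -- the vectors and the key scalar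
  set u2 : L := Pprod o S v with hu2def
  set uj : Fin (l + 1) → L := fun jj => Pprod o (S.erase jj) (y jj) with hujdef
  set cS : ℂ := ∏ i ∈ Finset.range K2, ((x : ℂ) + i - K2) with hcSdef
  have hcS0 : cS ≠ 0 := by
    rw [hcSdef, Finset.prod_ne_zero_iff]
    intro i hi
    rw [Finset.mem_range] at hi
    have hcast : (x : ℂ) + i - K2 = ((x - K2 + i : ℕ) : ℂ) := by
      rw [Nat.cast_add, Nat.cast_sub (by omega : K2 ≤ x)]
      ring
    rw [hcast]
    exact Nat.cast_ne_zero.mpr (by omega)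
  have hk1 : ⁅EE o t, v⁆ = 0 := hkv o t (by omega)
  -- pairing (a) : Q_S u2
  have hQS_u2 : Qprod o S u2 = (cS * x) • v := by
    rw [hu2def, raise_prod o hoS hv.1 H2v H3v H4v S S (Finset.Subset.refl S)
      (Finset.Subset.refl S), Finset.sdiff_self, Pprod_empty, Module.End.one_apply]
    congr 1
    rw [hcardS, hlamo, hcSdef, Finset.prod_range_succ]
    have h1 : ∀ i ∈ Finset.range K2,
        (x : ℂ) + 1 + i - ((K2 + 1 : ℕ) : ℂ) = (x : ℂ) + i - K2 := by
      intro i _; push_cast; ring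
    rw [Finset.prod_congr rfl h1]
    have h2 : (x : ℂ) + 1 + (K2 : ℂ) - ((K2 + 1 : ℕ) : ℂ) = (x : ℂ) := by push_cast; ring
    rw [h2]
  -- pairing (b) : Q_S (uj j)
  have hQdec : ∀ jj ∈ S, Qprod o S = (Rop o jj * Qprod o (S.erase jj) : Module.End ℂ L) := by
    intro jj hjj
    conv_lhs => rw [← Finset.insert_erase hjj]
    exact Qprod_insert o (Finset.notMem_erase jj S)
  have hinner_uj : ∀ jj ∈ S, Qprod o (S.erase jj) (uj jj) = cS • y jj := by
    intro jj hjj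
    show Qprod o (S.erase jj) (Pprod o (S.erase jj) (y jj)) = cS • y jj
    rw [raise_prod o (hoE jj) (hyw jj) (H2y jj hjj) (H3y jj hjj) (H4y jj hjj)
      (S.erase jj) (S.erase jj) (Finset.Subset.refl _) (Finset.Subset.refl _),
      Finset.sdiff_self, Pprod_empty, Module.End.one_apply]
    congr 1
    rw [Finset.card_erase_of_mem hjj, hcardS, Nat.add_sub_cancel, hlamyo jj hjj, hcSdef]
    apply Finset.prod_congr rfl
    intro i _
    ring
  have hkvtj : ∀ jj ∈ S, ⁅EE t jj, v⁆ = 0 := by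
    intro jj hjj; exact hkv t jj (by have := hjS jj hjj; omega)
  have hkvoj : ∀ jj ∈ S, ⁅EE o jj, v⁆ = 0 := by
    intro jj hjj; exact hkv o jj (by have := hjS jj hjj; omega)
  have hC3 : ∀ jj ∈ S, ⁅EE o jj, y jj⁆ = ((x : ℂ) - 1) • v := by
    intro jj hjj
    simp only [hydef, hzdef]
    rw [C3' hv.1 (hjt jj hjj) (fun h => hto h) hk1 (hkvtj jj hjj) (hkvoj jj hjj), hlamot]
  have hQS_uj : ∀ jj ∈ S, Qprod o S (uj jj) = (cS * ((x : ℂ) - 1)) • v := by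
    intro jj hjj
    rw [hQdec jj hjj, Module.End.mul_apply, hinner_uj jj hjj, map_smul,
      Rop_apply o (hjo jj hjj), hC3 jj hjj, smul_smul]
  -- the operators A_j
  set Aj : Fin (l + 1) → Module.End ℂ L :=
    fun jj => (endo (EE o t)) ∘ₗ ((endo (EE t jj)) ∘ₗ (Qprod o (S.erase jj))) with hAjdef
  have hAj_apply : ∀ jj (w : L),
      Aj jj w = ⁅EE o t, ⁅EE t jj, Qprod o (S.erase jj) w⁆⁆ := by
    intro jj w
    simp [hAjdef]
  -- pairing (c) : A_j u2
  have hCz : ⁅EE o t, z⁆ = ((x : ℂ) - 1) • v := by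
    rw [hzdef, C3a hv.1 hk1, hlamot]
  have hAj_u2 : ∀ jj ∈ S, Aj jj u2 = (cS * ((x : ℂ) - 1)) • v := by
    intro jj hjj
    have hsub1 : S.erase jj ⊆ S := Finset.erase_subset jj S
    have hsd1 : S \ S.erase jj = {jj} := by
      ext a
      simp only [Finset.mem_sdiff, Finset.mem_erase, Finset.mem_singleton, not_and]
      constructor
      · rintro ⟨h1, h2⟩
        by_contra hne
        exact (h2 hne) h1
      · rintro rfl
        exact ⟨hjj, fun h => absurd rfl h⟩
    have hstep : Qprod o (S.erase jj) u2 = cS • ⁅EE jj o, v⁆ := by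
      rw [hu2def, raise_prod o hoS hv.1 H2v H3v H4v (S.erase jj) S (Finset.Subset.refl S)
        hsub1, hsd1, Pprod_singleton o (hjo jj hjj)]
      congr 1
      rw [Finset.card_erase_of_mem hjj, hcardS, Nat.add_sub_cancel, hlamo, hcSdef]
      apply Finset.prod_congr rfl
      intro i _
      push_cast
      ring
    rw [hAj_apply, hstep, lie_smul, lie_smul, C6 (fun h => hot h) (hkvtj jj hjj),
      ← hzdef, hCz, smul_smul]
  -- pairing (d) : A_j (uj j)
  have hC4z : ∀ jj ∈ S, ⁅EE t jj, y jj⁆ = (2 : ℂ) • z := by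
    intro jj hjj
    simp only [hydef]
    rw [C4 hzw (by rw [hzdef]; exact C4b (hjt jj hjj) (fun h => hot h) (hkvtj jj hjj)),
      hlamzt, hlamz2 jj (hjS jj hjj).1]
    norm_num
  have hAj_uj : ∀ jj ∈ S, Aj jj (uj jj) = (cS * (2 * ((x : ℂ) - 1))) • v := by
    intro jj hjj
    rw [hAj_apply, hinner_uj jj hjj, lie_smul, hC4z jj hjj, lie_smul, lie_smul, hCz]
    rw [smul_smul, smul_smul]
    congr 1
    ring
  -- pairing (e) : A_j (uj i) for i ≠ j
  have hAj_ui : ∀ jj ∈ S, ∀ ii ∈ S, ii ≠ jj → Aj jj (uj ii) = (cS * ((x : ℂ) - 3)) • v := by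
    intro jj hjj ii hii hne
    have hK21 : 1 ≤ K2 := by
      have h2c : 1 < S.card := Finset.one_lt_card.mpr ⟨ii, hii, jj, hjj, hne⟩
      omega
    have hiE : ii ∈ S.erase jj := Finset.mem_erase.mpr ⟨hne, hii⟩
    have hQdec2 : Qprod o (S.erase jj)
        = (Rop o ii * Qprod o ((S.erase jj).erase ii) : Module.End ℂ L) := by
      conv_lhs => rw [← Finset.insert_erase hiE]
      exact Qprod_insert o (Finset.notMem_erase ii _)
    have hsub2 : (S.erase jj).erase ii ⊆ S.erase ii := by
      intro a ha
      rw [Finset.mem_erase] at ha ⊢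
      rcases ha with ⟨h1, h2⟩
      rw [Finset.mem_erase] at h2
      exact ⟨h1, h2.2⟩
    have hsd2 : (S.erase ii) \ ((S.erase jj).erase ii) = {jj} := by
      ext a
      simp only [Finset.mem_sdiff, Finset.mem_erase, Finset.mem_singleton, not_and]
      constructor
      · rintro ⟨⟨hai, haS⟩, h2⟩
        by_contra haj
        exact h2 hai haj haS
      · rintro rfl
        exact ⟨⟨Ne.symm hne, hjj⟩, fun _ h => absurd rfl h⟩
    have hcarde2 : ((S.erase jj).erase ii).card = K2 - 1 := by
      rw [Finset.card_erase_of_mem hiE, Finset.card_erase_of_mem hjj, hcardS]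
      omega
    have hcardei : (S.erase ii).card = K2 := by
      rw [Finset.card_erase_of_mem hii, hcardS]
      omega
    have hK2s : K2 = K2 - 1 + 1 := by omega
    have hK2s' : K2 - 1 + 1 = K2 := by omega
    have hcS'' : cS = (∏ i ∈ Finset.range (K2 - 1), ((x : ℂ) + i - K2)) * ((x : ℂ) - 1) := by
      rw [hcSdef]
      conv_lhs => rw [hK2s]
      rw [Finset.prod_range_succ, hK2s']
      congr 1
      rw [Nat.cast_sub hK21]
      ring
    have hstep : Qprod o ((S.erase jj).erase ii) (uj ii)
        = (∏ i ∈ Finset.range (K2 - 1), ((x : ℂ) + i - K2)) • ⁅EE jj o, y ii⁆ := by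
      show Qprod o ((S.erase jj).erase ii) (Pprod o (S.erase ii) (y ii)) = _
      rw [raise_prod o (hoE ii) (hyw ii) (H2y ii hii) (H3y ii hii) (H4y ii hii)
        ((S.erase jj).erase ii) (S.erase ii) (Finset.Subset.refl _) hsub2,
        hsd2, Pprod_singleton o (hjo jj hjj)]
      congr 1
      rw [hcarde2, hcardei, hlamyo ii hii]
      apply Finset.prod_congr rfl
      intro i _
      ring
    have hC7' : ⁅EE o ii, ⁅EE jj o, y ii⁆⁆ = ((x : ℂ) - 1) • ⁅EE jj o, v⁆ - y jj := by
      simp only [hydef, hzdef]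
      rw [C7 hv.1 hne (hjt ii hii) (fun h => hto h) (fun h => (hjo jj hjj) h.symm)
        (fun h => (hjt jj hjj) h.symm) hk1 (hkvtj ii hii) (hkvoj ii hii)
        (hkv2 jj ii (hjS jj hjj).1 (hjS ii hii).1 (fun h => hne h.symm)), hlamot]
    have h1 : ⁅EE t jj, ((x : ℂ) - 1) • ⁅EE jj o, v⁆ - y jj⁆
        = ((x : ℂ) - 1) • z - (2 : ℂ) • z := by
      rw [lie_sub, lie_smul, C6 (fun h => hot h) (hkvtj jj hjj), ← hzdef, hC4z jj hjj]
    have h2 : ⁅EE o t, ((x : ℂ) - 1) • z - (2 : ℂ) • z⁆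
        = ((x : ℂ) - 1) • (((x : ℂ) - 1) • v) - (2 : ℂ) • (((x : ℂ) - 1) • v) := by
      rw [lie_sub, lie_smul, lie_smul, hCz]
    rw [hAj_apply, hQdec2, Module.End.mul_apply, hstep, map_smul, Rop_apply o (hjo ii hii),
      hC7', lie_smul, h1, lie_smul, h2, hcS'']
    module
  -- the common weight
  set mu : Fin (l + 1) → ℂ := addWt o lam S with hmudef
  have hu2mem : u2 ∈ glWtSp (l + 1) L mu := wtP o hoS hv.1 S (Finset.Subset.refl S)
  have hujmem : ∀ jj ∈ S, uj jj ∈ glWtSp (l + 1) L mu := by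
    intro jj hjj
    have h0 := wtP o (hoE jj) (hyw jj) (S.erase jj) (Finset.Subset.refl _)
    have heq : addWt o (lamy jj) (S.erase jj) = mu := by
      funext w
      simp only [hmudef, addWt, hlamydef, hlamzdef, Finset.card_erase_of_mem hjj, hcardS,
        Nat.add_sub_cancel, Finset.mem_erase]
      by_cases h1 : w = o
      · subst h1
        simp [hoS, Ne.symm (hjo jj hjj)]
        try push_cast
        try ring
      · by_cases h2 : w = jj
        · subst h2
          simp [h1, hjj, hjt w hjj, hjo w hjj]
          try push_cast
          try ring
        · by_cases h3 : w = t
          · subst h3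
            simp [h1, h2, htS]
            try push_cast
            try ring
          · by_cases h4 : w ∈ S
            · simp [h1, h2, h3, h4]
              try push_cast
              try ring
            · simp [h1, h2, h3, h4]
              try push_cast
              try ring
    show Pprod o (S.erase jj) (y jj) ∈ glWtSp (l + 1) L mu
    rw [← heq]
    exact h0
  -- the indexing type
  set uu : Option {jj : Fin (l + 1) // jj ∈ S} → L :=
    fun b => match b with
      | none => u2
      | some sj => uj sj.1
    with huudef
  have humem : ∀ b, uu b ∈ glWtSp (l + 1) L mu := by
    intro b
    cases b with
    | none => exact hu2mem
    | some sj => exact hujmem sj.1 sj.2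
  -- linear independence
  have hli : LinearIndependent ℂ uu := by
    rw [Fintype.linearIndependent_iff]
    intro g hg
    set T : ℂ := ∑ sj : {jj : Fin (l + 1) // jj ∈ S}, g (some sj) with hTdef
    have e2 : cS * ((x : ℂ) * g none + ((x : ℂ) - 1) * T) = 0 := by
      have h := congrArg (Qprod o S) hg
      rw [map_zero, map_sum] at h
      simp only [map_smul] at h
      rw [Fintype.sum_option] at h
      have hnone : Qprod o S (uu none) = (cS * x) • v := hQS_u2
      have hsome : ∀ sj : {jj : Fin (l + 1) // jj ∈ S},
          Qprod o S (uu (some sj)) = (cS * ((x : ℂ) - 1)) • v := fun sj => hQS_uj sj.1 sj.2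
      rw [hnone] at h
      simp only [hsome] at h
      simp only [smul_smul] at h
      rw [← Finset.sum_smul, ← add_smul] at h
      have hscal := (smul_eq_zero.mp h).resolve_right hv0
      rw [← Finset.sum_mul, ← hTdef] at hscal
      linear_combination hscal
    have ej : ∀ sj : {jj : Fin (l + 1) // jj ∈ S},
        cS * (((x : ℂ) - 1) * g none + ((x : ℂ) - 3) * T + ((x : ℂ) + 1) * g (some sj)) = 0 := by
      intro sj
      have h := congrArg (Aj sj.1) hg
      rw [map_zero, map_sum] at h
      simp only [map_smul] at h
      rw [Fintype.sum_option] at h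
      have hnone : Aj sj.1 (uu none) = (cS * ((x : ℂ) - 1)) • v := hAj_u2 sj.1 sj.2
      have hsome : ∀ ti : {jj : Fin (l + 1) // jj ∈ S}, Aj sj.1 (uu (some ti))
          = (cS * (((x : ℂ) - 3) + if ti = sj then ((x : ℂ) + 1) else 0)) • v := by
        intro ti
        by_cases hts : ti = sj
        · subst hts
          rw [if_pos rfl]
          have h' : Aj ti.1 (uu (some ti)) = (cS * (2 * ((x : ℂ) - 1))) • v :=
            hAj_uj ti.1 ti.2
          rw [h']
          congr 1
          ring
        · rw [if_neg hts]
          have h' : Aj sj.1 (uu (some ti)) = (cS * ((x : ℂ) - 3)) • v :=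
            hAj_ui sj.1 sj.2 ti.1 ti.2 (fun hh => hts (Subtype.ext hh))
          rw [h']
          congr 1
          ring
      rw [hnone] at h
      simp only [hsome] at h
      simp only [smul_smul] at h
      rw [← Finset.sum_smul, ← add_smul] at h
      have hscal := (smul_eq_zero.mp h).resolve_right hv0
      have hsplit : (∑ ti : {jj : Fin (l + 1) // jj ∈ S},
          g (some ti) * (cS * (((x : ℂ) - 3) + if ti = sj then ((x : ℂ) + 1) else 0)))
          = T * (cS * ((x : ℂ) - 3)) + g (some sj) * (cS * ((x : ℂ) + 1)) := by
        have hterm : ∀ ti : {jj : Fin (l + 1) // jj ∈ S},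
            g (some ti) * (cS * (((x : ℂ) - 3) + if ti = sj then ((x : ℂ) + 1) else 0))
            = g (some ti) * (cS * ((x : ℂ) - 3))
              + (if ti = sj then g (some ti) * (cS * ((x : ℂ) + 1)) else 0) := by
          intro ti
          split_ifs <;> ring
        rw [Finset.sum_congr rfl (fun ti _ => hterm ti), Finset.sum_add_distrib,
          ← Finset.sum_mul, ← hTdef,
          Finset.sum_ite_eq' Finset.univ sj
            (fun ti => g (some ti) * (cS * ((x : ℂ) + 1)))]
        simp
      rw [hsplit] at hscal
      linear_combination hscal
    have hx0 : (x : ℂ) ≠ 0 := Nat.cast_ne_zero.mpr (by omega)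
    have hx1 : (x : ℂ) + 1 ≠ 0 := by
      have h' : ((x + 1 : ℕ) : ℂ) ≠ 0 := Nat.cast_ne_zero.mpr (by omega)
      push_cast at h'
      exact h'
    have hxk : (x : ℂ) - (K2 : ℂ) - 1 ≠ 0 := by
      have h1 : ((x - (K2 + 1) : ℕ) : ℂ) ≠ 0 := Nat.cast_ne_zero.mpr (by omega)
      rw [Nat.cast_sub (by omega)] at h1
      push_cast at h1
      intro hc
      apply h1
      linear_combination hc
    have E2 : (x : ℂ) * g none + ((x : ℂ) - 1) * T = 0 :=
      (mul_eq_zero.mp e2).resolve_left hcS0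
    have EJ : ∀ sj, ((x : ℂ) - 1) * g none + ((x : ℂ) - 3) * T + ((x : ℂ) + 1) * g (some sj)
        = 0 := fun sj => (mul_eq_zero.mp (ej sj)).resolve_left hcS0
    have h0 : ∑ sj : {jj : Fin (l + 1) // jj ∈ S},
        (((x : ℂ) - 1) * g none + ((x : ℂ) - 3) * T + ((x : ℂ) + 1) * g (some sj)) = 0 := by
      simp only [EJ, Finset.sum_const_zero]
    rw [Finset.sum_add_distrib, Finset.sum_add_distrib, Finset.sum_const, Finset.sum_const,
      ← Finset.mul_sum, ← hTdef, Finset.card_univ] at h0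
    rw [nsmul_eq_mul, nsmul_eq_mul] at h0
    have hcard' : ((Fintype.card {jj : Fin (l + 1) // jj ∈ S} : ℕ) : ℂ) = (K2 : ℂ) + 1 := by
      rw [Fintype.card_coe, hcardS]
      push_cast
      ring
    rw [hcard'] at h0
    have hT : T = 0 := by
      have hkey : ((x : ℂ) + 1) * ((x : ℂ) - (K2 : ℂ) - 1) * T = 0 := by
        linear_combination (x : ℂ) * h0 - ((K2 : ℂ) + 1) * ((x : ℂ) - 1) * E2
      rcases mul_eq_zero.mp hkey with h | h
      · rcases mul_eq_zero.mp h with h' | h'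
        · exact absurd h' hx1
        · exact absurd h' hxk
      · exact h
    have hg0 : g none = 0 := by
      have h' := E2
      rw [hT, mul_zero, add_zero] at h'
      exact (mul_eq_zero.mp h').resolve_left hx0
    intro b
    cases b with
    | none => exact hg0
    | some sj =>
      have h' := EJ sj
      rw [hT, hg0, mul_zero, mul_zero, zero_add, zero_add] at h'
      exact (mul_eq_zero.mp h').resolve_left hx1
  -- conclude
  have hliS : LinearIndependent ℂ
      (fun b => (⟨uu b, humem b⟩ : glWtSp (l + 1) L mu)) := by
    apply LinearIndependent.of_comp ((glWtSp (l + 1) L mu).subtype)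
    exact hli
  have hcardle : Fintype.card (Option {jj : Fin (l + 1) // jj ∈ S})
      ≤ Module.finrank ℂ (glWtSp (l + 1) L mu) := hliS.fintype_card_le_finrank
  have hcardk : Fintype.card (Option {jj : Fin (l + 1) // jj ∈ S}) = k := by
    rw [Fintype.card_option, Fintype.card_coe, hcardS]
    omega
  have hbdd : BddAbove {d : ℕ | ∃ lam' : Fin (l + 1) → ℂ,
      d = Module.finrank ℂ (glWtSp (l + 1) L lam')} := by
    refine ⟨Module.finrank ℂ L, ?_⟩
    rintro d ⟨lam', rfl⟩
    exact Submodule.finrank_le _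
  have hmemset : Module.finrank ℂ (glWtSp (l + 1) L mu) ∈
      {d : ℕ | ∃ lam' : Fin (l + 1) → ℂ, d = Module.finrank ℂ (glWtSp (l + 1) L lam')} :=
    ⟨mu, rfl⟩
  calc k = Fintype.card (Option {jj : Fin (l + 1) // jj ∈ S}) := hcardk.symm
    _ ≤ Module.finrank ℂ (glWtSp (l + 1) L mu) := hcardle
    _ ≤ maxMult (l + 1) L := le_csSup hbdd hmemset

end
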